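/- In the Garside group G_{n,m} = ⟨x₁,…,xₙ ∣ Π(x₁,…,xₙ;m) = Π(x₂,…,xₙ,x₁;m) = … = Π(xₙ,x₁,…,x_{n−1};m)⟩ with simple elements S = {Π(x_i,…,x_{i+n}; k) : 1 ≤ i ≤ n, 0 ≤ k ≤ m} (indices mod n), the left gcd of two simple elements s = Π(x_i,…;k) and t = Π(x_j,…;l) with k ≤ l satisfies: s ∧_L t = e if i ≠ j and l < m, and s ∧_L t = s if i = j or l = m. In particular s ∧_L t ∈ {e, s, t} for all simple s, t. -/

import Mathlib

set_option linter.unusedSectionVars false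
set_option maxHeartbeats 1000000



/-- The alternating-cyclic word `Π(x_i, x_{i+1}, …; k)` (indices mod `n`)
in the free group on `n` generators. -/
def prodGWord (n : ℕ) (hn : 0 < n) (i k : ℕ) : FreeGroup (Fin n) :=
  ((List.range k).map (fun j => FreeGroup.of (⟨(i + j) % n, Nat.mod_lt _ hn⟩ : Fin n))).prod

/-- The defining relators of `G_{n,m}`:
`Π(x₁,…,xₙ;m) = Π(x₂,…,xₙ,x₁;m) = … = Π(xₙ,x₁,…,x_{n-1};m)`. -/
def GnmRels (n m : ℕ) (hn : 0 < n) : Set (FreeGroup (Fin n)) :=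
  {r | ∃ i < n, r = prodGWord n hn i m * (prodGWord n hn 0 m)⁻¹}

/-- The Garside group `G_{n,m}`. -/
def Gnm (n m : ℕ) (hn : 0 < n) : Type := PresentedGroup (GnmRels n m hn)

instance (n m : ℕ) (hn : 0 < n) : Group (Gnm n m hn) := by unfold Gnm; infer_instance

/-- The positive monoid of `G_{n,m}`, generated by the images of the generators. -/
def GnmPos (n m : ℕ) (hn : 0 < n) : Submonoid (Gnm n m hn) :=
  Submonoid.closure (Set.range (PresentedGroup.of : Fin n → Gnm n m hn))

/-- The simple element `Π(x_i, x_{i+1}, …; k)` of `G_{n,m}`. -/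
def GnmSimple (n m : ℕ) (hn : 0 < n) (i k : ℕ) : Gnm n m hn :=
  ((List.range k).map (fun j =>
    (PresentedGroup.of (⟨(i + j) % n, Nat.mod_lt _ hn⟩ : Fin n) : Gnm n m hn))).prod

/-- `c` is a left gcd of `s` and `t` with respect to the prefix order induced by `P`. -/
def IsLeftGCD {G : Type*} [Group G] (P : Submonoid G) (s t c : G) : Prop :=
  c⁻¹ * s ∈ P ∧ c⁻¹ * t ∈ P ∧ ∀ d : G, d⁻¹ * s ∈ P → d⁻¹ * t ∈ P → d⁻¹ * c ∈ P


namespace GnmAux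

open Fin.NatCast Fin.CommRing

variable (n m : ℕ) [NeZero n]

section
variable (hm : 0 < m)

abbrev Blk (n : ℕ) := Fin n × ℕ

/-- end letter of a block -/
def bEnd (B : Blk n) : Fin n := B.1 + (B.2 : Fin n)

/-- shift all blocks by `d` -/
def shiftL (d : Fin n) (L : List (Blk n)) : List (Blk n) := L.map (fun B => (B.1 + d, B.2))

/-- a possibly-empty block -/
def mk0 (a : Fin n) (t : ℕ) : List (Blk n) := if t = 0 then [] else [(a, t)]

/-- right-multiplication by generator `c` on states (blocks stored most-recent-first) -/
def push (c : Fin n) : ℤ × List (Blk n) → ℤ × List (Blk n)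
  | (e, []) => if m = 1 then (e+1, []) else (e, [(c,1)])
  | (e, (b,t) :: K) =>
    if c = b + (t : Fin n) then
      if t + 1 = m then (e+1, shiftL n (m : Fin n) K) else (e, (b, t+1) :: K)
    else (e, (c,1) :: (b,t) :: K)

/-- right-division by generator `c` on states -/
def pop (c : Fin n) : ℤ × List (Blk n) → ℤ × List (Blk n)
  | (e, []) => (e-1, mk0 n (c + 1 - (m : Fin n)) (m-1))
  | (e, (b,t) :: K) =>
    if c + 1 = b + (t : Fin n) then
      (if t = 1 then (e, K) else (e, (b, t-1) :: K))
    else (e-1, mk0 n (c + 1 - (m : Fin n)) (m-1) ++ shiftL n (-(m : Fin n)) ((b,t) :: K))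

/-- apply the consecutive run `x_i x_{i+1} ⋯` of length `k` -/
def run (i : Fin n) (k : ℕ) (s : ℤ × List (Blk n)) : ℤ × List (Blk n) :=
  match k with
  | 0 => s
  | k+1 => run (i+1) k (push n m i s)

def VB (L : List (Blk n)) : Prop := ∀ B ∈ L, 1 ≤ B.2 ∧ B.2 < m

def VC (L : List (Blk n)) : Prop := List.IsChain (fun B C => B.1 ≠ bEnd n C) L

def Valid (s : ℤ × List (Blk n)) : Prop := VB n m s.2 ∧ VC n s.2

lemma vb_shift {L} (h : VB n m L) (d : Fin n) : VB n m (shiftL n d L) := by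
  intro B hB
  simp only [shiftL, List.mem_map] at hB
  obtain ⟨C, hC, rfl⟩ := hB
  exact h C hC

lemma vc_shift {L} (h : VC n L) (d : Fin n) : VC n (shiftL n d L) := by
  unfold VC shiftL
  rw [List.isChain_map]
  refine h.imp ?_
  intro B C hBC hc
  apply hBC
  have : B.1 + d = (C.1 + (C.2 : Fin n)) + d := by
    simpa [bEnd, add_right_comm] using hc
  simpa [bEnd] using add_right_cancel this

lemma valid_nil (e : ℤ) : Valid n m (e, []) := by
  constructor
  · intro B hB; simp at hB
  · simp [VC]

include hm in
lemma push_valid {s} (hs : Valid n m s) (c : Fin n) : Valid n m (push n m c s) := by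
  obtain ⟨e, L⟩ := s
  obtain ⟨hb, hc⟩ := hs
  match L with
  | [] =>
    by_cases h1 : m = 1
    · simpa [push, h1] using valid_nil n m (e+1)
    · have : 1 < m := by omega
      refine ⟨?_, ?_⟩ <;> simp [push, h1, VB, VC, this]
  | (b,t) :: K =>
    simp only [push]
    split_ifs with h1 h2
    · refine ⟨vb_shift n m ?_ _, vc_shift n ?_ _⟩
      · intro B hB; exact hb B (List.mem_cons_of_mem _ hB)
      · exact (List.isChain_cons.mp hc).2
    · have ht : t + 1 < m := by
        rcases hb (b,t) (by simp) with ⟨_, h⟩; omega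
      refine ⟨?_, ?_⟩
      · intro B hB
        rcases List.mem_cons.mp hB with h | h
        · subst h; exact ⟨by omega, ht⟩
        · exact hb B (List.mem_cons_of_mem _ h)
      · rw [VC, List.isChain_cons] at hc ⊢
        exact ⟨fun y hy => (hc.1 y hy : _), hc.2⟩
    · have hm1 : m ≠ 1 := by
        rcases hb (b,t) (by simp) with ⟨h1', h2'⟩; omega
      refine ⟨?_, ?_⟩
      · intro B hB
        rcases List.mem_cons.mp hB with h | h
        · subst h
          constructor
          · omega
          · rcases hb (b,t) (by simp) with ⟨h1', h2'⟩; omega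
        · exact hb B h
      · rw [VC, List.isChain_cons_cons]
        exact ⟨by simpa [bEnd] using h1, hc⟩

lemma two_le_of_valid_cons {e b t K} (h : Valid n m (e, (b,t) :: K)) : 2 ≤ m := by
  rcases h.1 (b,t) (by simp) with ⟨h1, h2⟩; omega

lemma shift_shift (d d' : Fin n) (L : List (Blk n)) :
    shiftL n d (shiftL n d' L) = shiftL n (d' + d) L := by
  simp [shiftL, Function.comp, add_assoc]

lemma shift_neg_shift (d : Fin n) (L : List (Blk n)) :
    shiftL n (-d) (shiftL n d L) = L := by
  rw [shift_shift]; simp [shiftL]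

lemma shift_shift_neg (d : Fin n) (L : List (Blk n)) :
    shiftL n d (shiftL n (-d) L) = L := by
  rw [shift_shift]; simp [shiftL]

lemma cast_pred (hm : 0 < m) : ((m - 1 : ℕ) : Fin n) = (m : Fin n) - 1 := by
  have : ((m - 1 : ℕ) : Fin n) = ((m : ℕ) : Fin n) - ((1 : ℕ) : Fin n) := Nat.cast_sub hm
  simpa using this

lemma shiftL_cons (d : Fin n) (a : Fin n) (t : ℕ) (K : List (Blk n)) :
    shiftL n d ((a,t) :: K) = (a+d, t) :: shiftL n d K := rfl

lemma shiftL_nil (d : Fin n) : shiftL n d ([] : List (Blk n)) = [] := rfl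

include hm in
lemma pop_valid {s} (hs : Valid n m s) (c : Fin n) : Valid n m (pop n m c s) := by
  obtain ⟨e, L⟩ := s
  obtain ⟨hb, hc⟩ := hs
  match L with
  | [] =>
    by_cases h1 : m = 1
    · simpa [pop, mk0, h1] using valid_nil n m (e-1)
    · have h2 : 2 ≤ m := by omega
      simp only [pop, mk0, if_neg (by omega : ¬ m - 1 = 0)]
      refine ⟨?_, ?_⟩
      · intro B hB
        simp only [List.mem_singleton] at hB
        subst hB
        exact ⟨by omega, by omega⟩
      · simp [VC]
  | (b,t) :: K =>
    have h2 : 2 ≤ m := two_le_of_valid_cons n m (e := e) ⟨hb, hc⟩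
    have htt : 1 ≤ t ∧ t < m := hb (b,t) (by simp)
    simp only [pop]
    split_ifs with h1 ht
    · exact ⟨fun B hB => hb B (List.mem_cons_of_mem _ hB), (List.isChain_cons.mp hc).2⟩
    · refine ⟨?_, ?_⟩
      · intro B hB
        rcases List.mem_cons.mp hB with h | h
        · subst h; exact ⟨by omega, by omega⟩
        · exact hb B (List.mem_cons_of_mem _ h)
      · rw [VC, List.isChain_cons] at hc ⊢
        exact ⟨fun y hy => (hc.1 y hy : _), hc.2⟩
    · simp only [mk0, if_neg (by omega : ¬ m - 1 = 0), List.singleton_append,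
        shiftL_cons]
      refine ⟨?_, ?_⟩
      · intro B hB
        rcases List.mem_cons.mp hB with h | h
        · subst h; exact ⟨by omega, by omega⟩
        · rcases List.mem_cons.mp h with h' | h'
          · subst h'; exact htt
          · exact vb_shift n m (fun B hB => hb B (List.mem_cons_of_mem _ hB)) _ B h'
      · have hsh := vc_shift n hc (-(m : Fin n))
        rw [shiftL_cons] at hsh
        rw [VC, List.isChain_cons_cons]
        refine ⟨?_, hsh⟩
        simp only [bEnd]
        intro hcontra
        apply h1
        have : c + 1 - (m:Fin n) + (m : Fin n) = b + -(m:Fin n) + (t : Fin n) + (m : Fin n) := by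
          rw [hcontra]
        linear_combination (norm := ring) this

include hm in
lemma push_pop {s} (hs : Valid n m s) (c : Fin n) : pop n m c (push n m c s) = s := by
  obtain ⟨e, L⟩ := s
  match L with
  | [] =>
    by_cases h1 : m = 1
    · simp [push, pop, h1, mk0]
    · simp only [push, if_neg h1, pop]
      rw [if_pos (by push_cast; ring)]
      simp
  | (b,t) :: K =>
    have h2 : 2 ≤ m := two_le_of_valid_cons n m (e := e) hs
    have htt : 1 ≤ t ∧ t < m := hs.1 (b,t) (by simp)
    simp only [push]
    split_ifs with h1 ht
    · -- carry case: c = b + t, t + 1 = m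
      have hc1 : c + 1 = b + (m : Fin n) := by
        rw [h1, ← ht]; push_cast; ring
      have hbm : c + 1 - (m : Fin n) = b := by rw [hc1]; ring
      have hmt : m - 1 = t := by omega
      rcases K with _ | ⟨⟨d, u⟩, K'⟩
      · simp only [shiftL_nil, pop, hbm, mk0, hmt, if_neg (by omega : ¬ t = 0)]
        norm_num
      · have hch : b ≠ d + (u : Fin n) := by
          have := hs.2
          rw [VC, List.isChain_cons_cons] at this
          exact this.1
        rw [shiftL_cons]
        simp only [pop]
        rw [if_neg ?hne]
        case hne =>
          rw [hc1]
          intro hcontra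
          exact hch (by linear_combination (norm := ring) hcontra)
        have hsh : shiftL n (-(m:Fin n)) ((d + (m:Fin n), u) :: shiftL n (m:Fin n) K')
            = (d,u) :: K' := by
          have := shift_neg_shift n ((m:Fin n)) ((d,u) :: K')
          rw [shiftL_cons] at this
          exact this
        rw [hsh, hbm]
        simp only [mk0, hmt, if_neg (by omega : ¬ t = 0), List.singleton_append]
        norm_num
    · -- grow case
      simp only [pop]
      rw [if_pos (by rw [h1]; push_cast; ring)]
      rw [if_neg (by omega)]
      simp [Nat.add_sub_cancel]
    · -- fresh case
      simp only [pop]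
      rw [if_pos (by push_cast; ring)]
      simp

include hm in
lemma pop_push {s} (hs : Valid n m s) (c : Fin n) : push n m c (pop n m c s) = s := by
  obtain ⟨e, L⟩ := s
  match L with
  | [] =>
    by_cases h1 : m = 1
    · simp [pop, push, h1, mk0]
    · have h2 : 2 ≤ m := by omega
      simp only [pop, mk0, if_neg (by omega : ¬ m - 1 = 0), List.singleton_append]
      simp only [push]
      rw [if_pos ?hc]
      case hc => rw [cast_pred n m hm]; ring
      rw [if_pos (by omega), shiftL_nil]
      norm_num
  | (b,t) :: K =>
    have h2 : 2 ≤ m := two_le_of_valid_cons n m (e := e) hs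
    have htt : 1 ≤ t ∧ t < m := hs.1 (b,t) (by simp)
    simp only [pop]
    split_ifs with h1 ht
    · -- drop whole block (t = 1)
      subst ht
      have hcb : c = b := by
        have h1' : c + 1 = b + 1 := by simpa using h1
        linear_combination (norm := ring) h1'
      subst hcb
      rcases K with _ | ⟨⟨d, u⟩, K'⟩
      · simp [push, if_neg (by omega : ¬ m = 1)]
      · have hch : c ≠ d + (u : Fin n) := by
          have := hs.2
          rw [VC, List.isChain_cons_cons] at this
          simpa [bEnd] using this.1
        simp [push, if_neg hch]
    · -- shrink block
      simp only [push]
      rw [if_pos ?hc]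
      case hc =>
        have hcast : ((t - 1 : ℕ) : Fin n) = (t : Fin n) - 1 := by
          have := Nat.cast_sub (R := Fin n) (by omega : 1 ≤ t)
          simpa using this
        rw [hcast]
        linear_combination (norm := ring) h1
      rw [if_neg (by omega)]
      have htt1 : t - 1 + 1 = t := by omega
      rw [htt1]
    · -- borrow
      simp only [mk0, if_neg (by omega : ¬ m - 1 = 0), List.singleton_append]
      simp only [push]
      rw [if_pos ?hc]
      case hc => rw [cast_pred n m hm]; ring
      rw [if_pos (by omega)]
      rw [shift_shift_neg]
      norm_num

include hm in
lemma run_spec : ∀ k, k ≤ m → ∀ (i : Fin n) (e : ℤ) (L : List (Blk n)), Valid n m (e, L) →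
    ((∀ b t K, L = (b,t)::K → i ≠ b + (t:Fin n)) →
       run n m i k (e, L) =
         if k < m then (e, mk0 n i k ++ L) else (e+1, shiftL n (m:Fin n) L))
    ∧ (∀ b t K, L = (b,t)::K → i = b + (t:Fin n) →
       run n m i k (e, L) =
         if t + k < m then (e, (b, t+k) :: K)
         else (e+1, mk0 n (b + (m:Fin n)) (t+k-m) ++ shiftL n (m:Fin n) K)) := by
  intro k
  induction k with
  | zero =>
    intro _ i e L hv
    constructor
    · intro _
      rw [if_pos hm]
      simp [run, mk0]
    · intro b t K hL hi
      have htt : 1 ≤ t ∧ t < m := by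
        subst hL; exact hv.1 (b,t) (by simp)
      rw [if_pos (by omega)]
      simp [run, hL]
  | succ k ih =>
    intro hk i e L hv
    have hk' : k ≤ m := by omega
    constructor
    · -- fresh case
      intro hfresh
      match L with
      | [] =>
        by_cases h1 : m = 1
        · have hk0 : k = 0 := by omega
          subst hk0
          simp [run, push, h1, shiftL_nil]
        · have h2 : 2 ≤ m := by omega
          have hpush : push n m i (e, []) = (e, [(i,1)]) := by simp [push, h1]
          have hval : Valid n m (e, [(i,1)]) := by
            rw [← hpush]; exact push_valid n m hm (valid_nil n m e) i
          have := (ih hk' (i+1) e [(i,1)] hval).2 i 1 [] rfl (by push_cast; ring)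
          show run n m (i+1) k (push n m i (e, [])) = _
          rw [hpush, this]
          by_cases hklt : k + 1 < m
          · rw [if_pos (by omega), if_pos hklt]
            simp only [mk0, if_neg (by omega : ¬ (1+k) = 0), if_neg (by omega : ¬ (k+1) = 0)]
            rw [Nat.add_comm 1 k]
            simp
          · have hkm : k + 1 = m := by omega
            rw [if_neg (by omega), if_neg (by omega)]
            simp only [mk0, if_pos (by omega : 1+k-m = 0), shiftL_nil, List.nil_append]
      | (b,t) :: K =>
        have hne : i ≠ b + (t : Fin n) := hfresh b t K rfl
        have h2 : 2 ≤ m := two_le_of_valid_cons n m (e := e) hv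
        have hpush : push n m i (e, (b,t)::K) = (e, (i,1)::(b,t)::K) := by
          simp [push, if_neg hne]
        have hval : Valid n m (e, (i,1)::(b,t)::K) := by
          rw [← hpush]; exact push_valid n m hm hv i
        have := (ih hk' (i+1) e _ hval).2 i 1 ((b,t)::K) rfl (by push_cast; ring)
        show run n m (i+1) k (push n m i (e, (b,t)::K)) = _
        rw [hpush, this]
        by_cases hklt : k + 1 < m
        · rw [if_pos (by omega), if_pos hklt]
          simp only [mk0, if_neg (by omega : ¬ (1+k) = 0), if_neg (by omega : ¬ (k+1) = 0)]
          rw [Nat.add_comm 1 k]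
          simp
        · have hkm : k + 1 = m := by omega
          rw [if_neg (by omega), if_neg (by omega)]
          simp only [mk0, if_pos (by omega : 1+k-m = 0), List.nil_append]
    · -- continue case
      intro b t K hL hi
      subst hL
      have htt : 1 ≤ t ∧ t < m := hv.1 (b,t) (by simp)
      by_cases ht1 : t + 1 = m
      · -- carry at first step
        have hpush : push n m i (e, (b,t)::K) = (e+1, shiftL n (m:Fin n) K) := by
          simp [push, if_pos hi, ht1]
        have hval : Valid n m (e+1, shiftL n (m:Fin n) K) := by
          rw [← hpush]; exact push_valid n m hm hv i
        have hfresh2 : ∀ d u K', shiftL n (m:Fin n) K = (d,u)::K' →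
            i + 1 ≠ d + (u : Fin n) := by
          intro d u K' hK
          rcases K with _ | ⟨⟨d0, u0⟩, K0⟩
          · simp [shiftL_nil] at hK
          · rw [shiftL_cons] at hK
            simp only [List.cons.injEq, Prod.mk.injEq] at hK
            obtain ⟨⟨hd, hu⟩, hK'⟩ := hK
            have hch : b ≠ d0 + (u0 : Fin n) := by
              have := hv.2
              rw [VC, List.isChain_cons_cons] at this
              exact this.1
            subst hd; subst hu
            intro hcontra
            apply hch
            have hcast : i + 1 = b + ((t+1 : ℕ) : Fin n) := by rw [hi]; push_cast; ring
            rw [hcast, ht1] at hcontra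
            linear_combination (norm := ring) hcontra
        have := (ih hk' (i+1) (e+1) _ hval).1 (fun d u K' hK => hfresh2 d u K' hK)
        show run n m (i+1) k (push n m i (e, (b,t)::K)) = _
        rw [hpush, this]
        rw [if_pos (by omega : k < m)]
        rw [if_neg (by omega : ¬ t + (k+1) < m)]
        have hi1 : i + 1 = b + (m : Fin n) := by
          rw [hi, ← ht1]; push_cast; ring
        rw [hi1]
        have : t + (k+1) - m = k := by omega
        rw [this]
      · -- grow at first step
        have ht1' : t + 1 < m := by omega
        have hpush : push n m i (e, (b,t)::K) = (e, (b,t+1)::K) := by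
          simp [push, if_pos hi, if_neg ht1]
        have hval : Valid n m (e, (b,t+1)::K) := by
          rw [← hpush]; exact push_valid n m hm hv i
        have := (ih hk' (i+1) e _ hval).2 b (t+1) K rfl (by rw [hi]; push_cast; ring)
        show run n m (i+1) k (push n m i (e, (b,t)::K)) = _
        rw [hpush, this]
        have harith : t + 1 + k = t + (k+1) := by omega
        rw [harith]

include hm in
lemma run_full (i : Fin n) {e : ℤ} {L : List (Blk n)} (hv : Valid n m (e, L)) :
    run n m i m (e, L) = (e+1, shiftL n (m : Fin n) L) := by
  match L with
  | [] =>
    have := (run_spec n m hm m le_rfl i e [] hv).1 (by intro b t K h; simp at h)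
    rw [this, if_neg (by omega)]
  | (b,t) :: K =>
    have htt : 1 ≤ t ∧ t < m := hv.1 (b,t) (by simp)
    by_cases hi : i = b + (t : Fin n)
    · have := (run_spec n m hm m le_rfl i e _ hv).2 b t K rfl hi
      rw [this, if_neg (by omega)]
      simp only [Nat.add_sub_cancel, mk0, if_neg (by omega : ¬ t = 0), shiftL_cons,
        List.singleton_append]
    · have := (run_spec n m hm m le_rfl i e _ hv).1
        (by intro b' t' K' h hc; injection h with h1 h2; rw [Prod.mk.injEq] at h1; obtain ⟨rfl, rfl⟩ := h1; exact hi hc)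
      rw [this, if_neg (by omega)]

include hm in
lemma run_incr (i : Fin n) (k : ℕ) (hk : k < m) {e : ℤ} {L : List (Blk n)}
    (hv : Valid n m (e, L)) :
    (run n m i k (e, L)).1 = e ∨
      ((run n m i k (e, L)).1 = e + 1 ∧ ∃ b t K, L = (b,t)::K ∧ i = b + (t : Fin n)) := by
  match L with
  | [] =>
    left
    have := (run_spec n m hm k (by omega) i e [] hv).1 (by intro b t K h; simp at h)
    rw [this, if_pos hk]
  | (b,t) :: K =>
    by_cases hi : i = b + (t : Fin n)
    · have := (run_spec n m hm k (by omega) i e _ hv).2 b t K rfl hi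
      by_cases htk : t + k < m
      · left; rw [this, if_pos htk]
      · right
        refine ⟨?_, b, t, K, rfl, hi⟩
        rw [this, if_neg htk]
    · left
      have := (run_spec n m hm k (by omega) i e _ hv).1
        (by intro b' t' K' h hc; injection h with h1 h2; rw [Prod.mk.injEq] at h1; obtain ⟨rfl, rfl⟩ := h1; exact hi hc)
      rw [this, if_pos hk]

lemma push_e_le (c : Fin n) (s : ℤ × List (Blk n)) : s.1 ≤ (push n m c s).1 := by
  obtain ⟨e, L⟩ := s
  match L with
  | [] =>
    by_cases h1 : m = 1 <;> simp [push, h1]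
  | (b,t) :: K =>
    simp only [push]
    split_ifs <;> simp

end

section GroupPart

variable (hn : 0 < n) (hm : 0 < m)

def XS := {s : ℤ × List (Blk n) // Valid n m s}

def pushE (c : Fin n) : Equiv.Perm (XS n m) where
  toFun x := ⟨push n m c x.1, push_valid n m hm x.2 c⟩
  invFun x := ⟨pop n m c x.1, pop_valid n m hm x.2 c⟩
  left_inv x := Subtype.ext (push_pop n m hm x.2 c)
  right_inv x := Subtype.ext (pop_push n m hm x.2 c)

def fgen (c : Fin n) : (Equiv.Perm (XS n m))ᵐᵒᵖ := MulOpposite.op (pushE n m hm c)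

lemma lift_word (i k : ℕ) : ∀ (x : XS n m),
    ((FreeGroup.lift (fgen n m hm) (prodGWord n hn i k)).unop x).1
      = run n m ((i : ℕ) : Fin n) k x.1 := by
  induction k generalizing i with
  | zero =>
    intro x
    have : prodGWord n hn i 0 = 1 := by simp [prodGWord]
    rw [this]
    simp [run]
  | succ k ih =>
    intro x
    have hw : prodGWord n hn i (k+1)
        = FreeGroup.of (⟨i % n, Nat.mod_lt _ hn⟩ : Fin n) * prodGWord n hn (i+1) k := by
      unfold prodGWord
      rw [List.range_succ_eq_map, List.map_cons, List.prod_cons, List.map_map]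
      congr 2
      apply List.map_congr_left
      intro j _
      simp only [Function.comp_apply]
      congr 1
      ext
      show (i + (j+1)) % n = ((i+1) + j) % n
      congr 1
      omega
    rw [hw, map_mul, MulOpposite.unop_mul, Equiv.Perm.mul_apply]
    have hof : (FreeGroup.lift (fgen n m hm) (FreeGroup.of (⟨i % n, Nat.mod_lt _ hn⟩ : Fin n))).unop x
        = ⟨push n m (⟨i % n, Nat.mod_lt _ hn⟩ : Fin n) x.1, push_valid n m hm x.2 _⟩ := by
      rw [FreeGroup.lift_apply_of]
      rfl
    rw [hof]; refine (ih (i+1) _).trans ?_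
    show run n m (((i+1 : ℕ)) : Fin n) k _ = _
    have hfin : ((i : ℕ) : Fin n) = (⟨i % n, Nat.mod_lt _ hn⟩ : Fin n) := by
      ext; simp [Fin.val_natCast]
    have hfin1 : (((i+1 : ℕ)) : Fin n) = ((i : ℕ) : Fin n) + 1 := by push_cast; ring
    rw [hfin1, hfin]
    rfl

lemma relhom : ∀ r ∈ GnmRels n m hn, FreeGroup.lift (fgen n m hm) r = 1 := by
  intro r hr
  obtain ⟨a, ha, rfl⟩ := hr
  rw [map_mul, map_inv]
  have : FreeGroup.lift (fgen n m hm) (prodGWord n hn a m)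
      = FreeGroup.lift (fgen n m hm) (prodGWord n hn 0 m) := by
    apply MulOpposite.unop_injective
    apply Equiv.ext
    intro x
    apply Subtype.ext
    rw [lift_word n m hn hm a m x, lift_word n m hn hm 0 m x]
    obtain ⟨⟨e, L⟩, hv⟩ := x
    rw [run_full n m hm _ hv, run_full n m hm _ hv]
  rw [this, mul_inv_cancel]

def Phi : Gnm n m hn →* (Equiv.Perm (XS n m))ᵐᵒᵖ :=
  PresentedGroup.toGroup (relhom n m hn hm)

def act (g : Gnm n m hn) (x : XS n m) : XS n m := ((Phi n m hn hm) g).unop x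

lemma act_mul (g h : Gnm n m hn) (x : XS n m) :
    act n m hn hm (g * h) x = act n m hn hm h (act n m hn hm g x) := by
  simp [act, map_mul]

lemma act_one (x : XS n m) : act n m hn hm 1 x = x := by
  simp [act]

def mkh : FreeGroup (Fin n) →* Gnm n m hn :=
  QuotientGroup.mk' (Subgroup.normalClosure (GnmRels n m hn))

def ofG (c : Fin n) : Gnm n m hn := PresentedGroup.of c

lemma mkh_of (a : Fin n) : mkh n m hn (FreeGroup.of a) = PresentedGroup.of a := rfl

lemma mkh_surj : Function.Surjective (mkh n m hn) :=
  QuotientGroup.mk'_surjective _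

lemma Phi_mkh (w : FreeGroup (Fin n)) :
    Phi n m hn hm (mkh n m hn w) = FreeGroup.lift (fgen n m hm) w := rfl

lemma mkh_prodGWord (i k : ℕ) :
    mkh n m hn (prodGWord n hn i k) = GnmSimple n m hn i k := by
  unfold prodGWord GnmSimple
  rw [map_list_prod, List.map_map]
  rfl

lemma act_simple (i k : ℕ) (x : XS n m) :
    (act n m hn hm (GnmSimple n m hn i k) x).1 = run n m ((i : ℕ) : Fin n) k x.1 := by
  rw [← mkh_prodGWord]
  show ((Phi n m hn hm (mkh n m hn (prodGWord n hn i k))).unop x).1 = _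
  rw [Phi_mkh]
  exact lift_word n m hn hm i k x

lemma act_of (a : Fin n) (x : XS n m) :
    act n m hn hm (PresentedGroup.of a) x = ⟨push n m a x.1, push_valid n m hm x.2 a⟩ := by
  show ((Phi n m hn hm) (PresentedGroup.of a)).unop x = _
  have : (Phi n m hn hm) (PresentedGroup.of a) = fgen n m hm a :=
    PresentedGroup.toGroup.of (relhom n m hn hm)
  rw [this]
  rfl

lemma simple_split (i k d : ℕ) :
    GnmSimple n m hn i (k+d) = GnmSimple n m hn i k * GnmSimple n m hn (i+k) d := by
  unfold GnmSimple
  rw [List.range_add, List.map_append, List.prod_append]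
  congr 1
  rw [List.map_map]
  congr 1
  apply List.map_congr_left
  intro j _
  simp only [Function.comp_apply]
  congr 1
  ext
  show (i + (k + j)) % n = (i + k + j) % n
  congr 1
  omega

lemma simple_one (a : ℕ) :
    GnmSimple n m hn a 1 = PresentedGroup.of (⟨a % n, Nat.mod_lt _ hn⟩ : Fin n) := by
  unfold GnmSimple
  simp [List.range_succ]
  rfl

lemma simple_mod (i k : ℕ) : GnmSimple n m hn (i % n) k = GnmSimple n m hn i k := by
  unfold GnmSimple
  congr 1
  apply List.map_congr_left
  intro j _
  congr 1
  ext
  show (i % n + j) % n = (i + j) % n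
  rw [Nat.mod_add_mod]

lemma simple_delta (a : ℕ) : GnmSimple n m hn a m = GnmSimple n m hn 0 m := by
  have key : ∀ b, b < n → GnmSimple n m hn b m = GnmSimple n m hn 0 m := by
    intro b hb
    have hrel : (prodGWord n hn b m * (prodGWord n hn 0 m)⁻¹) ∈ GnmRels n m hn := ⟨b, hb, rfl⟩
    have h1 : mkh n m hn (prodGWord n hn b m * (prodGWord n hn 0 m)⁻¹) = 1 := by
      apply (QuotientGroup.eq_one_iff _).mpr
      exact Subgroup.subset_normalClosure hrel
    rw [map_mul, map_inv] at h1
    have h2 := mul_inv_eq_one.mp h1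
    rw [mkh_prodGWord, mkh_prodGWord] at h2
    exact h2
  rw [← simple_mod n m hn a m]
  exact key (a % n) (Nat.mod_lt _ hn)

lemma delta_comm_simple (a t : ℕ) :
    GnmSimple n m hn a t * GnmSimple n m hn 0 m
      = GnmSimple n m hn 0 m * GnmSimple n m hn (a+m) t := by
  induction t generalizing a with
  | zero =>
    have h0 : ∀ c : ℕ, GnmSimple n m hn c 0 = 1 := by intro c; unfold GnmSimple; simp; rfl
    rw [h0, h0, one_mul, mul_one]
  | succ t ih =>
    have hsplit : GnmSimple n m hn a (t+1)
        = GnmSimple n m hn a t * GnmSimple n m hn (a+t) 1 := simple_split n m hn a t 1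
    have hone : GnmSimple n m hn (a+t) 1 * GnmSimple n m hn 0 m
        = GnmSimple n m hn 0 m * GnmSimple n m hn (a+t+m) 1 := by
      have e1 : GnmSimple n m hn (a+t) 1 * GnmSimple n m hn (a+t+1) m
          = GnmSimple n m hn (a+t) (1+m) := (simple_split n m hn (a+t) 1 m).symm
      have e2 : GnmSimple n m hn (a+t) (m+1)
          = GnmSimple n m hn (a+t) m * GnmSimple n m hn (a+t+m) 1 :=
        simple_split n m hn (a+t) m 1
      rw [simple_delta n m hn (a+t+1)] at e1
      rw [simple_delta n m hn (a+t)] at e2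
      rw [e1, Nat.add_comm 1 m, e2]
    rw [hsplit, mul_assoc, hone, ← mul_assoc, ih, mul_assoc]
    congr 1
    have : GnmSimple n m hn (a+m) (t+1)
        = GnmSimple n m hn (a+m) t * GnmSimple n m hn (a+m+t) 1 := simple_split n m hn (a+m) t 1
    rw [this]
    congr 2
    omega

def blkP (B : Blk n) : Gnm n m hn := GnmSimple n m hn B.1.val B.2

def prodRev (L : List (Blk n)) : Gnm n m hn := (L.reverse.map (blkP n m hn)).prod

lemma prodRev_nil : prodRev n m hn [] = 1 := rfl

lemma prodRev_cons (B : Blk n) (K : List (Blk n)) :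
    prodRev n m hn (B :: K) = prodRev n m hn K * blkP n m hn B := by
  unfold prodRev
  rw [List.reverse_cons, List.map_append, List.prod_append]
  simp

lemma mod_add_mod' (a t : ℕ) (ha : a < n) : (a + t % n) % n = (a + t) % n := by
  conv_rhs => rw [Nat.add_mod, Nat.mod_eq_of_lt ha]

lemma blkP_shift (B : Blk n) :
    blkP n m hn (B.1 + (m : Fin n), B.2) = GnmSimple n m hn (B.1.val + m) B.2 := by
  unfold blkP
  have hval : (B.1 + (m : Fin n)).val = (B.1.val + m) % n := by
    rw [Fin.add_def, Fin.val_natCast]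
    exact mod_add_mod' n B.1.val m B.1.isLt
  rw [hval, simple_mod]

lemma prodRev_shift (K : List (Blk n)) :
    prodRev n m hn K * GnmSimple n m hn 0 m
      = GnmSimple n m hn 0 m * prodRev n m hn (shiftL n (m : Fin n) K) := by
  induction K with
  | nil => simp [prodRev_nil, shiftL_nil]
  | cons B K ih =>
    obtain ⟨b, t⟩ := B
    rw [prodRev_cons, shiftL_cons, prodRev_cons, mul_assoc]
    have h1 : blkP n m hn (b,t) * GnmSimple n m hn 0 m
        = GnmSimple n m hn 0 m * GnmSimple n m hn (b.val + m) t := delta_comm_simple n m hn b.val t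
    rw [h1, ← mul_assoc, ih, mul_assoc]
    congr 2
    exact (blkP_shift n m hn (b,t)).symm

def betaF (x : XS n m) : Gnm n m hn :=
  (GnmSimple n m hn 0 m) ^ x.1.1 * prodRev n m hn x.1.2

lemma betaF_mk (s : ℤ × List (Blk n)) (h : Valid n m s) :
    betaF n m hn ⟨s, h⟩ = (GnmSimple n m hn 0 m) ^ s.1 * prodRev n m hn s.2 := rfl

lemma of_eq_simple (c : Fin n) :
    ofG n m hn c = GnmSimple n m hn c.val 1 := by
  show (PresentedGroup.of c : Gnm n m hn) = _
  rw [simple_one]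
  congr 1
  ext
  simp [Nat.mod_eq_of_lt c.isLt]

lemma simple_cont (b : Fin n) (t : ℕ) :
    GnmSimple n m hn (b + (t : Fin n) : Fin n).val 1 = GnmSimple n m hn (b.val + t) 1 := by
  have hval : (b + (t : Fin n)).val = (b.val + t) % n := by
    rw [Fin.add_def, Fin.val_natCast]
    exact mod_add_mod' n b.val t b.isLt
  rw [hval, simple_mod]

lemma beta_push (c : Fin n) (x : XS n m) :
    betaF n m hn (⟨push n m c x.1, push_valid n m hm x.2 c⟩)
      = betaF n m hn x * ofG n m hn c := by
  obtain ⟨⟨e, L⟩, hv⟩ := x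
  have hofc := of_eq_simple n m hn c
  match L with
  | [] =>
    by_cases h1 : m = 1
    · have hgoal : betaF n m hn ⟨push n m c (e, []), push_valid n m hm (valid_nil n m e) c⟩
          = betaF n m hn ⟨(e+1, []), valid_nil n m (e+1)⟩ := by
        congr 1
        apply Subtype.ext
        simp [push, h1]
      rw [hgoal, betaF_mk, betaF_mk, prodRev_nil, mul_one, mul_one, zpow_add_one]
      congr 1
      rw [hofc, ← h1]
      exact (simple_delta n m hn c.val).symm
    · have hgoal : betaF n m hn ⟨push n m c (e, []), push_valid n m hm (valid_nil n m e) c⟩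
          = betaF n m hn ⟨(e, [(c,1)]), by rw [show ((e : ℤ), [(c,1)]) = push n m c (e, []) by simp [push, h1]]; exact push_valid n m hm (valid_nil n m e) c⟩ := by
        congr 1
        apply Subtype.ext
        simp [push, h1]
      rw [hgoal, betaF_mk, betaF_mk, prodRev_nil, mul_one, prodRev_cons, prodRev_nil, one_mul]
      rw [hofc]
      rfl
  | (b,t) :: K =>
    have h2 : 2 ≤ m := two_le_of_valid_cons n m (e := e) hv
    have hcontprod : ∀ hcc : c = b + (t : Fin n),
        blkP n m hn (b,t) * ofG n m hn c
          = GnmSimple n m hn b.val (t+1) := by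
      intro hcc
      rw [hofc, hcc, simple_cont]
      exact (simple_split n m hn b.val t 1).symm
    by_cases hc : c = b + (t : Fin n)
    · by_cases ht : t + 1 = m
      · -- carry
        have hpush : push n m c (e, (b,t)::K) = (e+1, shiftL n (m : Fin n) K) := by
          simp [push, if_pos hc, ht]
        have hgoal : (⟨push n m c (e, (b,t)::K), push_valid n m hm hv c⟩ : XS n m)
            = ⟨(e+1, shiftL n (m : Fin n) K), by rw [← hpush]; exact push_valid n m hm hv c⟩ :=
          Subtype.ext hpush
        rw [hgoal, betaF_mk, betaF_mk, zpow_add_one, mul_assoc,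
          ← prodRev_shift, prodRev_cons]
        have : blkP n m hn (b,t) * ofG n m hn c
            = GnmSimple n m hn 0 m := by
          rw [hcontprod hc, ht]
          exact simple_delta n m hn b.val
        rw [mul_assoc, mul_assoc, this]
      · -- grow
        have hpush : push n m c (e, (b,t)::K) = (e, (b,t+1)::K) := by
          simp [push, if_pos hc, if_neg ht]
        have hgoal : (⟨push n m c (e, (b,t)::K), push_valid n m hm hv c⟩ : XS n m)
            = ⟨(e, (b,t+1)::K), by rw [← hpush]; exact push_valid n m hm hv c⟩ :=
          Subtype.ext hpush
        rw [hgoal, betaF_mk, betaF_mk, prodRev_cons, prodRev_cons, mul_assoc, mul_assoc,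
          hcontprod hc]
        rfl
    · -- fresh
      have hpush : push n m c (e, (b,t)::K) = (e, (c,1)::(b,t)::K) := by
        simp [push, if_neg hc]
      have hgoal : (⟨push n m c (e, (b,t)::K), push_valid n m hm hv c⟩ : XS n m)
          = ⟨(e, (c,1)::(b,t)::K), by rw [← hpush]; exact push_valid n m hm hv c⟩ :=
        Subtype.ext hpush
      rw [hgoal, betaF_mk, betaF_mk, prodRev_cons]
      rw [mul_assoc, hofc]
      rfl

lemma beta_act : ∀ (g : Gnm n m hn) (x : XS n m),
    betaF n m hn (act n m hn hm g x) = betaF n m hn x * g := by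
  intro g
  obtain ⟨w, rfl⟩ := mkh_surj n m hn g
  refine FreeGroup.induction_on (C := fun w => ∀ x : XS n m,
    betaF n m hn (act n m hn hm (mkh n m hn w) x) = betaF n m hn x * mkh n m hn w) w ?_ ?_ ?_ ?_
  · intro x
    rw [map_one, act_one, mul_one]
  · intro a x
    have hpure : (pure a : FreeGroup (Fin n)) = FreeGroup.of a := rfl
    have : mkh n m hn (FreeGroup.of a) = PresentedGroup.of a := mkh_of n m hn a
    rw [this, act_of]
    exact beta_push n m hn hm a ⟨x.1, x.2⟩
  · intro a ha x
    have hpure : (pure a : FreeGroup (Fin n)) = FreeGroup.of a := rfl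
    rw [map_inv, mkh_of]
    set y := act n m hn hm (PresentedGroup.of a)⁻¹ x with hy
    have hxy : act n m hn hm (PresentedGroup.of a) y = x := by
      rw [hy]; exact (act_mul n m hn hm _ _ x).symm.trans ((congrArg (fun g => act n m hn hm g x) (inv_mul_cancel _)).trans (act_one n m hn hm x))
    have := ha y
    rw [mkh_of, hxy] at this
    exact eq_mul_inv_of_mul_eq this.symm
  · intro w1 w2 h1 h2 x
    rw [map_mul, act_mul, h2, h1, mul_assoc]

lemma simple_memP (i k : ℕ) : GnmSimple n m hn i k ∈ GnmPos n m hn := by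
  unfold GnmSimple
  apply Submonoid.list_prod_mem
  intro g hg
  replace hg := List.mem_map.mp hg
  obtain ⟨j, _, rfl⟩ := hg
  exact Submonoid.subset_closure ⟨_, rfl⟩

lemma beta_memP (x : XS n m) (h : 0 ≤ x.1.1) : betaF n m hn x ∈ GnmPos n m hn := by
  apply mul_mem
  · obtain ⟨a, ha⟩ := Int.eq_ofNat_of_zero_le h
    rw [ha, zpow_natCast]
    exact pow_mem (simple_memP n m hn 0 m) a
  · apply Submonoid.list_prod_mem
    intro g hg
    simp only [List.mem_map] at hg
    obtain ⟨B, _, rfl⟩ := hg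
    exact simple_memP n m hn B.1.val B.2

lemma act_e_mono : ∀ g ∈ GnmPos n m hn, ∀ x : XS n m, x.1.1 ≤ (act n m hn hm g x).1.1 := by
  intro g hg
  refine Submonoid.closure_induction ?_ ?_ ?_ hg
  · rintro g ⟨a, rfl⟩ x
    rw [act_of]
    exact push_e_le n m a x.1
  · intro x
    rw [act_one]
  · intro g h _ _ hg' hh' x
    calc x.1.1 ≤ (act n m hn hm g x).1.1 := hg' x
    _ ≤ (act n m hn hm h (act n m hn hm g x)).1.1 := hh' _
    _ = (act n m hn hm (g*h) x).1.1 := by rw [act_mul]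

def x0 : XS n m := ⟨((0 : ℤ), []), valid_nil n m 0⟩

lemma beta_x0 : betaF n m hn (x0 n m) = 1 := by
  show (GnmSimple n m hn 0 m) ^ (0:ℤ) * prodRev n m hn [] = 1
  rw [prodRev_nil, mul_one, zpow_zero]

lemma key_lemma (i j k l : ℕ) (hi : i < n) (hj : j < n) (hij : i ≠ j)
    (hkm : k < m) (hlm : l < m) (u : Gnm n m hn)
    (hus : u * GnmSimple n m hn i k ∈ GnmPos n m hn)
    (hut : u * GnmSimple n m hn j l ∈ GnmPos n m hn) : u ∈ GnmPos n m hn := by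
  have hm : 0 < m := by omega
  set x := act n m hn hm u (x0 n m) with hx
  have hs : (0:ℤ) ≤ (act n m hn hm (u * GnmSimple n m hn i k) (x0 n m)).1.1 :=
    act_e_mono n m hn hm _ hus (x0 n m)
  have ht : (0:ℤ) ≤ (act n m hn hm (u * GnmSimple n m hn j l) (x0 n m)).1.1 :=
    act_e_mono n m hn hm _ hut (x0 n m)
  rw [act_mul] at hs ht
  rw [← hx] at hs ht
  have hs' : (0:ℤ) ≤ (run n m ((i : ℕ) : Fin n) k x.1).1 := by
    rw [← act_simple n m hn hm]; exact hs
  have ht' : (0:ℤ) ≤ (run n m ((j : ℕ) : Fin n) l x.1).1 := by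
    rw [← act_simple n m hn hm]; exact ht
  rcases le_or_gt 0 x.1.1 with he | he
  · have h1 : betaF n m hn x = u := by
      rw [hx, beta_act, beta_x0, one_mul]
    rw [← h1]
    exact beta_memP n m hn x he
  · exfalso
    have hxpair : x.1 = (x.1.1, x.1.2) := rfl
    have hv : Valid n m (x.1.1, x.1.2) := by rw [← hxpair]; exact x.2
    rcases run_incr n m hm ((i : ℕ) : Fin n) k hkm hv with h | ⟨_, b, t, K, hL, hibt⟩
    · rw [hxpair] at hs'; rw [h] at hs'; omega
    · rcases run_incr n m hm ((j : ℕ) : Fin n) l hlm hv with h' | ⟨_, b', t', K', hL', hjbt⟩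
      · rw [hxpair] at ht'; rw [h'] at ht'; omega
      · rw [hL] at hL'
        injection hL' with hbt hKK
        rw [Prod.mk.injEq] at hbt
        obtain ⟨rfl, rfl⟩ := hbt
        apply hij
        have : ((i : ℕ) : Fin n) = ((j : ℕ) : Fin n) := by rw [hibt, hjbt]
        have hval := congrArg Fin.val this
        simp only [Fin.val_natCast] at hval
        rw [Nat.mod_eq_of_lt hi, Nat.mod_eq_of_lt hj] at hval
        exact hval

end GroupPart
end GnmAux

theorem Gnm_simple_left_gcd (n m : ℕ) (hn : 0 < n) (hm : 0 < m)
    (i j k l : ℕ) (hi : i < n) (hj : j < n) (hkl : k ≤ l) (hlm : l ≤ m) :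
    ((i ≠ j ∧ l < m) →
      IsLeftGCD (GnmPos n m hn) (GnmSimple n m hn i k) (GnmSimple n m hn j l) 1) ∧
    ((i = j ∨ l = m) →
      IsLeftGCD (GnmPos n m hn) (GnmSimple n m hn i k) (GnmSimple n m hn j l)
        (GnmSimple n m hn i k)) ∧
    (∃ c ∈ ({1, GnmSimple n m hn i k, GnmSimple n m hn j l} : Set (Gnm n m hn)),
      IsLeftGCD (GnmPos n m hn) (GnmSimple n m hn i k) (GnmSimple n m hn j l) c) := by
  haveI : NeZero n := ⟨hn.ne'⟩
  have hsimple_mem : ∀ a b : ℕ, GnmSimple n m hn a b ∈ GnmPos n m hn :=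
    GnmAux.simple_memP n m hn
  have hpart1 : (i ≠ j ∧ l < m) →
      IsLeftGCD (GnmPos n m hn) (GnmSimple n m hn i k) (GnmSimple n m hn j l) 1 := by
    rintro ⟨hij, hlm'⟩
    refine ⟨by simpa using hsimple_mem i k, by simpa using hsimple_mem j l, ?_⟩
    intro d h1 h2
    rw [mul_one]
    exact GnmAux.key_lemma n m hn i j k l hi hj hij (lt_of_le_of_lt hkl hlm') hlm' d⁻¹ h1 h2
  have hpart2 : (i = j ∨ l = m) →
      IsLeftGCD (GnmPos n m hn) (GnmSimple n m hn i k) (GnmSimple n m hn j l)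
        (GnmSimple n m hn i k) := by
    intro hcase
    refine ⟨by rw [inv_mul_cancel]; exact one_mem _, ?_, fun d h1 _ => h1⟩
    rcases hcase with rfl | hlm2
    · have hkl' : k + (l - k) = l := by omega
      have hsp : GnmSimple n m hn i l
          = GnmSimple n m hn i k * GnmSimple n m hn (i+k) (l-k) := by
        conv_lhs => rw [← hkl']
        exact GnmAux.simple_split n m hn i k (l-k)
      rw [hsp, inv_mul_cancel_left]
      exact hsimple_mem _ _
    · have hdj : GnmSimple n m hn j m = GnmSimple n m hn i m := by
        rw [GnmAux.simple_delta n m hn j, GnmAux.simple_delta n m hn i]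
      have hkl' : k + (m - k) = m := by omega
      have hsp : GnmSimple n m hn i m
          = GnmSimple n m hn i k * GnmSimple n m hn (i+k) (m-k) := by
        have h := GnmAux.simple_split n m hn i k (m-k)
        rw [hkl'] at h
        exact h
      rw [hlm2, hdj, hsp, inv_mul_cancel_left]
      exact hsimple_mem _ _
  refine ⟨hpart1, hpart2, ?_⟩
  by_cases hc : i = j ∨ l = m
  · exact ⟨GnmSimple n m hn i k, Set.mem_insert_of_mem _ (Set.mem_insert _ _), hpart2 hc⟩
  · push_neg at hc
    exact ⟨1, Set.mem_insert _ _, hpart1 ⟨hc.1, lt_of_le_of_ne hlm hc.2⟩⟩
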